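/- (Algebraic content of Proposition on |D|² and the second fundamental form.) Let m ≥ 3, let R = (R_ij) be symmetric with S = R_tt, let f satisfy the adapted-frame condition with w ≠ 0, and suppose the pointwise gradient Einstein-type equation holds with α ≠ 0 and β ≠ 0. Define the second fundamental form components h_ab = −H_ab / w for a, b ∈ {1,…,m−1} and the mean curvature h = (1/(m−1)) Σ_a h_aa. Then Σ_{i,j,k} (D_ijk)² = (β/α)² (2 w⁴ / (m−2)²) Σ_{a,b} (h_ab − h δ_ab)² + (2 w² / ((m−1)(m−2))) Σ_a (R_am)². -/

import Mathlib

open Finset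

/-- Kronecker delta. -/
noncomputable def kdelta {m : ℕ} (i j : Fin m) : ℝ := if i = j then 1 else 0

/-- The 3-tensor `D` built from the Ricci components `R` and the gradient components `f`. -/
noncomputable def Dt (m : ℕ) (R : Fin m → Fin m → ℝ) (f : Fin m → ℝ)
    (i j k : Fin m) : ℝ :=
  (1 / ((m : ℝ) - 2)) * (f k * R i j - f j * R i k)
  + (1 / (((m : ℝ) - 1) * ((m : ℝ) - 2))) *
      ∑ t, f t * (R t k * kdelta i j - R t j * kdelta i k)
  - ((∑ t, R t t) / (((m : ℝ) - 1) * ((m : ℝ) - 2))) *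
      (f k * kdelta i j - f j * kdelta i k)

/-- squared norm of `D` in terms of the traceless second fundamental
form of the level set and the mixed Ricci components, in an adapted frame. Here `e`
is the distinguished last index (the direction of `∇f/|∇f|`) and the lowercase
indices range over `Finset.univ.erase e` (i.e. `{1,…,m−1}`). -/
theorem D_norm_sq_second_fundamental_form (m : ℕ) (hm : 3 ≤ m)
    (R H : Fin m → Fin m → ℝ)
    (hR : ∀ i j, R i j = R j i) (hHsymm : ∀ i j, H i j = H j i)
    (f : Fin m → ℝ) (e : Fin m) (w : ℝ) (hw : w ≠ 0)
    (hfa : ∀ a, a ≠ e → f a = 0) (hfe : f e = w)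
    (α β μ ρ lam : ℝ) (hα : α ≠ 0) (hβ : β ≠ 0)
    (heq : ∀ i j, α * R i j + β * H i j + μ * f i * f j
      = (ρ * (∑ t, R t t) + lam) * kdelta i j)
    (h : Fin m → Fin m → ℝ) (hdef : ∀ a b, h a b = - H a b / w)
    (hmean : ℝ)
    (hmeandef : hmean = (1 / ((m : ℝ) - 1)) * ∑ a ∈ Finset.univ.erase e, h a a) :
    ∑ i, ∑ j, ∑ k, (Dt m R f i j k) ^ 2
      = (β / α) ^ 2 * (2 * w ^ 4 / ((m : ℝ) - 2) ^ 2) *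
          ∑ a ∈ Finset.univ.erase e, ∑ b ∈ Finset.univ.erase e,
            (h a b - hmean * kdelta a b) ^ 2
        + (2 * w ^ 2 / (((m : ℝ) - 1) * ((m : ℝ) - 2))) *
            ∑ a ∈ Finset.univ.erase e, (R a e) ^ 2 := by
  have hm3 : (3 : ℝ) ≤ (m : ℝ) := by exact_mod_cast hm
  have hm1 : (m : ℝ) - 1 ≠ 0 := by linarith
  have hm2 : (m : ℝ) - 2 ≠ 0 := by linarith
  set E := Finset.univ.erase e with hE
  set S := ∑ t, R t t with hS
  -- sums against f pick out the e-component
  have hsumf : ∀ g : Fin m → ℝ, ∑ t, f t * g t = w * g e := by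
    intro g
    rw [Finset.sum_eq_single e]
    · rw [hfe]
    · intro b _ hb; rw [hfa b hb, zero_mul]
    · intro hne; exact absurd (Finset.mem_univ e) hne
  -- kdelta basic facts
  have hkde : ∀ a : Fin m, a ≠ e → kdelta a e = 0 := fun a ha => if_neg ha
  have hkde' : ∀ a : Fin m, a ≠ e → kdelta e a = 0 := fun a ha => if_neg (Ne.symm ha)
  have hkdee : kdelta e e = (1 : ℝ) := if_pos rfl
  have hkdsum : ∀ a : Fin m, a ∈ E → ∀ x : Fin m → ℝ,
      ∑ b ∈ E, x b * kdelta a b = x a := by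
    intro a ha x
    rw [Finset.sum_eq_single_of_mem a ha]
    · simp [kdelta]
    · intro b _ hb
      rw [show kdelta a b = 0 from if_neg (Ne.symm hb), mul_zero]
  have hkdone : ∀ a : Fin m, a ∈ E → ∑ b ∈ E, kdelta a b = 1 := by
    intro a ha
    have := hkdsum a ha (fun _ => (1 : ℝ))
    simpa using this
  have hcardE : ∑ _b ∈ E, (1 : ℝ) = (m : ℝ) - 1 := by
    rw [Finset.sum_const, nsmul_eq_mul, mul_one, hE,
      Finset.card_erase_of_mem (Finset.mem_univ e), Finset.card_univ, Fintype.card_fin]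
    have h1m : 1 ≤ m := by omega
    push_cast [h1m]
    ring
  -- skew symmetry in the last two indices
  have hskew : ∀ i j k, Dt m R f i j k = - Dt m R f i k j := by
    intro i j k
    simp only [Dt, hsumf]
    ring
  have hDijj : ∀ i j, Dt m R f i j j = 0 := by
    intro i j
    have := hskew i j j
    linarith
  -- component values
  have hDabc : ∀ a b c : Fin m, a ≠ e → b ≠ e → c ≠ e →
      Dt m R f a b c
        = w / (((m : ℝ) - 1) * ((m : ℝ) - 2)) * (R e c * kdelta a b - R e b * kdelta a c) := by
    intro a b c ha hb hc
    simp only [Dt, hsumf, hfa b hb, hfa c hc]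
    field_simp
    ring
  have hDabe : ∀ a b : Fin m, a ≠ e → b ≠ e →
      Dt m R f a b e
        = w / ((m : ℝ) - 2) * (R a b + (R e e - S) / ((m : ℝ) - 1) * kdelta a b) := by
    intro a b ha hb
    simp only [Dt, hsumf, hfa b hb, hfe, hkde a ha, hkdee, ← hS]
    field_simp
    ring
  have hDebe : ∀ b : Fin m, b ≠ e →
      Dt m R f e b e = w * R e b / ((m : ℝ) - 1) := by
    intro b hb
    simp only [Dt, hsumf, hfa b hb, hfe, hkde' b hb, hkdee, ← hS]
    field_simp
    ring
  have hDebc : ∀ b c : Fin m, b ≠ e → c ≠ e → Dt m R f e b c = 0 := by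
    intro b c hb hc
    simp only [Dt, hsumf, hfa b hb, hfa c hc, hkde' b hb, hkde' c hc]
    ring
  -- Einstein equation consequences
  have hH : ∀ a b, H a b = -(w * h a b) := by
    intro a b
    have h0 := hdef a b
    field_simp at h0
    linarith
  have hRab : ∀ a b : Fin m, a ≠ e → b ≠ e →
      α * R a b = (ρ * S + lam) * kdelta a b + β * (w * h a b) := by
    intro a b ha hb
    have h0 := heq a b
    rw [hfa a ha, hH a b] at h0
    ring_nf at h0 ⊢
    linarith
  have hsum_h : ∑ a ∈ E, h a a = ((m : ℝ) - 1) * hmean := by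
    rw [hmeandef]
    field_simp
  have htr : ∑ a ∈ E, R a a = S - R e e := by
    have h0 := Finset.sum_erase_add Finset.univ (fun t => R t t) (Finset.mem_univ e)
    rw [hS]
    rw [← h0]
    ring
  have hsum_diag : α * (S - R e e)
      = ((m : ℝ) - 1) * (ρ * S + lam) + β * w * (((m : ℝ) - 1) * hmean) := by
    rw [← htr, Finset.mul_sum]
    have h1 : ∀ a ∈ E, α * R a a = (ρ * S + lam) * 1 + β * w * h a a := by
      intro a ha
      have ha' : a ≠ e := Finset.ne_of_mem_erase ha
      have h2 := hRab a a ha' ha'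
      rw [show kdelta a a = (1 : ℝ) from if_pos rfl] at h2
      linarith
    rw [Finset.sum_congr rfl h1, Finset.sum_add_distrib]
    rw [← Finset.mul_sum, ← Finset.mul_sum, hcardE, hsum_h]
    ring
  -- key formula for the tangential components
  have hKey : ∀ a b : Fin m, a ≠ e → b ≠ e →
      Dt m R f a b e
        = β * w ^ 2 / (α * ((m : ℝ) - 2)) * (h a b - hmean * kdelta a b) := by
    intro a b ha hb
    rw [hDabe a b ha hb]
    have hr : R a b = ((ρ * S + lam) * kdelta a b + β * (w * h a b)) / α := by
      rw [eq_div_iff hα]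
      have := hRab a b ha hb
      linarith
    have hd : R e e - S
        = -(((m : ℝ) - 1) * (ρ * S + lam) + β * w * (((m : ℝ) - 1) * hmean)) / α := by
      rw [eq_div_iff hα]
      linarith [hsum_diag]
    rw [hr, hd]
    field_simp
    ring
  -- abbreviations
  set A := ∑ a ∈ E, (R a e) ^ 2 with hA
  set B := ∑ a ∈ E, ∑ b ∈ E, (h a b - hmean * kdelta a b) ^ 2 with hB
  have hsplit : ∀ g : Fin m → ℝ, ∑ i, g i = g e + ∑ i ∈ E, g i := by
    intro g
    have := Finset.sum_erase_add Finset.univ g (Finset.mem_univ e)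
    rw [hE, ← this]
    ring
  -- the i = e slab
  have hTee : ∑ k, (Dt m R f e e k) ^ 2 = w ^ 2 / ((m : ℝ) - 1) ^ 2 * A := by
    have step := hsplit (fun k => (Dt m R f e e k) ^ 2)
    rw [step, hDijj e e]
    have h1 : ∀ c ∈ E, (Dt m R f e e c) ^ 2 = w ^ 2 / ((m : ℝ) - 1) ^ 2 * (R c e) ^ 2 := by
      intro c hc
      have hc' : c ≠ e := Finset.ne_of_mem_erase hc
      rw [hskew e e c, hDebe c hc', hR e c, neg_sq, div_pow, mul_pow, mul_div_right_comm]
    rw [Finset.sum_congr rfl h1, ← Finset.mul_sum, ← hA]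
    ring
  have hTeb : ∀ b ∈ E, ∑ k, (Dt m R f e b k) ^ 2
      = w ^ 2 / ((m : ℝ) - 1) ^ 2 * (R b e) ^ 2 := by
    intro b hb
    have hb' : b ≠ e := Finset.ne_of_mem_erase hb
    have step := hsplit (fun k => (Dt m R f e b k) ^ 2)
    rw [step, hDebe b hb', hR e b]
    have h1 : ∀ c ∈ E, (Dt m R f e b c) ^ 2 = 0 := by
      intro c hc
      rw [hDebc b c hb' (Finset.ne_of_mem_erase hc)]
      ring
    rw [Finset.sum_congr rfl h1, Finset.sum_const_zero, add_zero, div_pow, mul_pow, mul_div_right_comm]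
  have hTe : ∑ j, ∑ k, (Dt m R f e j k) ^ 2 = 2 * (w ^ 2 / ((m : ℝ) - 1) ^ 2) * A := by
    have step := hsplit (fun j => ∑ k, (Dt m R f e j k) ^ 2)
    rw [step, hTee, Finset.sum_congr rfl hTeb, ← Finset.mul_sum, ← hA]
    ring
  -- the tangential slabs
  have hQ : ∀ a ∈ E, ∑ b ∈ E, ∑ c ∈ E,
      (R e c * kdelta a b - R e b * kdelta a c) ^ 2 = 2 * A - 2 * (R a e) ^ 2 := by
    intro a ha
    have hpt : ∀ b c : Fin m,
        (R e c * kdelta a b - R e b * kdelta a c) ^ 2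
          = (R e c) ^ 2 * kdelta a b + (R e b) ^ 2 * kdelta a c
            - 2 * ((R e b * kdelta a b) * (R e c * kdelta a c)) := by
      intro b c
      simp only [kdelta]
      split_ifs <;> ring
    have hcongr : ∑ b ∈ E, ∑ c ∈ E, (R e c * kdelta a b - R e b * kdelta a c) ^ 2
        = ∑ b ∈ E, ∑ c ∈ E, ((R e c) ^ 2 * kdelta a b + (R e b) ^ 2 * kdelta a c
            - 2 * ((R e b * kdelta a b) * (R e c * kdelta a c))) := by
      refine Finset.sum_congr rfl fun b _ => Finset.sum_congr rfl fun c _ => hpt b c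
    rw [hcongr]
    have t1 : ∑ b ∈ E, ∑ c ∈ E, (R e c) ^ 2 * kdelta a b = A := by
      rw [Finset.sum_comm]
      have h1 : ∀ c ∈ E, ∑ b ∈ E, (R e c) ^ 2 * kdelta a b = (R e c) ^ 2 := by
        intro c _
        rw [← Finset.mul_sum, hkdone a ha, mul_one]
      rw [Finset.sum_congr rfl h1, hA]
      refine Finset.sum_congr rfl fun c _ => by rw [hR e c]
    have t2 : ∀ b : Fin m, ∑ c ∈ E, (R e b) ^ 2 * kdelta a c = (R e b) ^ 2 := by
      intro b
      rw [← Finset.mul_sum, hkdone a ha, mul_one]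
    have t3 : ∀ b : Fin m, ∑ c ∈ E, (R e b * kdelta a b) * (R e c * kdelta a c)
        = (R e b * kdelta a b) * (R e a) := by
      intro b
      rw [← Finset.mul_sum, hkdsum a ha (fun c => R e c)]
    simp only [Finset.sum_sub_distrib, Finset.sum_add_distrib]
    rw [t1]
    have t2' : ∑ b ∈ E, ∑ c ∈ E, (R e b) ^ 2 * kdelta a c = A := by
      rw [Finset.sum_congr rfl (fun b _ => t2 b), hA]
      refine Finset.sum_congr rfl fun b _ => by rw [hR e b]
    rw [t2']
    have t3' : ∑ b ∈ E, ∑ c ∈ E, 2 * ((R e b * kdelta a b) * (R e c * kdelta a c))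
        = 2 * (R a e) ^ 2 := by
      have := fun (b : Fin m) => t3 b
      calc ∑ b ∈ E, ∑ c ∈ E, 2 * ((R e b * kdelta a b) * (R e c * kdelta a c))
          = ∑ b ∈ E, 2 * ((R e b * kdelta a b) * (R e a)) := by
            refine Finset.sum_congr rfl fun b _ => by rw [← Finset.mul_sum, t3 b]
        _ = 2 * ((∑ b ∈ E, R e b * kdelta a b) * (R e a)) := by
            rw [Finset.sum_mul, ← Finset.mul_sum]
        _ = 2 * (R a e) ^ 2 := by
            rw [hkdsum a ha (fun b => R e b), hR e a]; ring
    rw [t3']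
    ring
  have hTa : ∀ a ∈ E, ∑ j, ∑ k, (Dt m R f a j k) ^ 2
      = 2 * (β * w ^ 2 / (α * ((m : ℝ) - 2))) ^ 2 *
          (∑ b ∈ E, (h a b - hmean * kdelta a b) ^ 2)
        + (w / (((m : ℝ) - 1) * ((m : ℝ) - 2))) ^ 2 * (2 * A - 2 * (R a e) ^ 2) := by
    intro a ha
    have ha' : a ≠ e := Finset.ne_of_mem_erase ha
    have step := hsplit (fun j => ∑ k, (Dt m R f a j k) ^ 2)
    rw [step]
    -- j = e part
    have part1 : ∑ k, (Dt m R f a e k) ^ 2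
        = (β * w ^ 2 / (α * ((m : ℝ) - 2))) ^ 2 *
            ∑ c ∈ E, (h a c - hmean * kdelta a c) ^ 2 := by
      have step2 := hsplit (fun k => (Dt m R f a e k) ^ 2)
      rw [step2, hDijj a e]
      have h1 : ∀ c ∈ E, (Dt m R f a e c) ^ 2
          = (β * w ^ 2 / (α * ((m : ℝ) - 2))) ^ 2 * (h a c - hmean * kdelta a c) ^ 2 := by
        intro c hc
        rw [hskew a e c, hKey a c ha' (Finset.ne_of_mem_erase hc)]
        ring
      rw [Finset.sum_congr rfl h1, ← Finset.mul_sum]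
      ring
    -- j tangential part
    have part2 : ∀ b ∈ E, ∑ k, (Dt m R f a b k) ^ 2
        = (β * w ^ 2 / (α * ((m : ℝ) - 2))) ^ 2 * (h a b - hmean * kdelta a b) ^ 2
          + (w / (((m : ℝ) - 1) * ((m : ℝ) - 2))) ^ 2 *
              ∑ c ∈ E, (R e c * kdelta a b - R e b * kdelta a c) ^ 2 := by
      intro b hb
      have hb' : b ≠ e := Finset.ne_of_mem_erase hb
      have step2 := hsplit (fun k => (Dt m R f a b k) ^ 2)
      rw [step2, hKey a b ha' hb']
      have h1 : ∀ c ∈ E, (Dt m R f a b c) ^ 2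
          = (w / (((m : ℝ) - 1) * ((m : ℝ) - 2))) ^ 2 *
              (R e c * kdelta a b - R e b * kdelta a c) ^ 2 := by
        intro c hc
        rw [hDabc a b c ha' hb' (Finset.ne_of_mem_erase hc)]
        ring
      rw [Finset.sum_congr rfl h1, ← Finset.mul_sum]
      ring
    rw [part1, Finset.sum_congr rfl part2, Finset.sum_add_distrib,
      ← Finset.mul_sum, ← Finset.mul_sum, hQ a ha]
    ring
  -- assemble
  have step := hsplit (fun i => ∑ j, ∑ k, (Dt m R f i j k) ^ 2)
  rw [step, hTe, Finset.sum_congr rfl hTa]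
  have hfinal : ∑ a ∈ E, (2 * (β * w ^ 2 / (α * ((m : ℝ) - 2))) ^ 2 *
          (∑ b ∈ E, (h a b - hmean * kdelta a b) ^ 2)
        + (w / (((m : ℝ) - 1) * ((m : ℝ) - 2))) ^ 2 * (2 * A - 2 * (R a e) ^ 2))
      = 2 * (β * w ^ 2 / (α * ((m : ℝ) - 2))) ^ 2 * B
        + (w / (((m : ℝ) - 1) * ((m : ℝ) - 2))) ^ 2 *
            (2 * ((m : ℝ) - 1) * A - 2 * A) := by
    rw [Finset.sum_add_distrib, ← Finset.mul_sum, ← hB, ← Finset.mul_sum]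
    congr 1
    congr 1
    have hco : ∀ a ∈ E, 2 * A - 2 * (R a e) ^ 2
        = (2 * A) * 1 - 2 * (R a e) ^ 2 := by intro a _; ring
    rw [Finset.sum_congr rfl hco, Finset.sum_sub_distrib, ← Finset.mul_sum,
      ← Finset.mul_sum, hcardE, ← hA]
    ring
  rw [hfinal]
  field_simp
  ring
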